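/- Let f(x,y) = y(2x²y² − 9xy + 12) be the first component of Ψ: ℝ³ → ℝ², Ψ(x,y,z) = (f(x,y), z). Then the Milnor set M(Ψ) = { (x,y,z) : 4xy⁴ − 9y³ − 6x³y² + 18x²y − 12x = 0 } is unbounded; in particular there exists a sequence (x_n, y_n, z) in M(Ψ) with x_n → ∞ and x_n y_n → 1. -/

import Mathlib

open Filter

noncomputable def TZu (n : ℕ) : ℝ := 1 + 1 / (n + 2)
noncomputable def TZc (n : ℕ) : ℝ :=
  (TZu n) ^ 3 * (9 - 4 * TZu n) / (6 * (TZu n - 1) * (2 - TZu n))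
noncomputable def TZx (n : ℕ) : ℝ := (TZc n) ^ ((1 : ℝ)/4)
noncomputable def TZy (n : ℕ) : ℝ := TZu n / TZx n

lemma TZu_gt (n : ℕ) : 1 < TZu n := by
  have h : (0:ℝ) < (n:ℝ) + 2 := by positivity
  simp only [TZu]; have := one_div_pos.mpr h; linarith

lemma TZu_le (n : ℕ) : TZu n ≤ 3/2 := by
  have h : (0:ℝ) < (n:ℝ) + 2 := by positivity
  have : 1 / ((n:ℝ) + 2) ≤ 1/2 := by
    apply one_div_le_one_div_of_le <;> linarith
  simp only [TZu]; linarith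

lemma TZc_pos (n : ℕ) : 0 < TZc n := by
  have h1 := TZu_gt n; have h2 := TZu_le n
  have h3 : (1:ℝ) ≤ (TZu n) ^ 3 := one_le_pow₀ h1.le
  apply div_pos <;> nlinarith

lemma TZx_pos (n : ℕ) : 0 < TZx n := Real.rpow_pos_of_pos (TZc_pos n) _

lemma TZx_pow (n : ℕ) : (TZx n) ^ 4 = TZc n := by
  have hc := (TZc_pos n).le
  rw [TZx, ← Real.rpow_natCast ((TZc n) ^ ((1:ℝ)/4)) 4, ← Real.rpow_mul hc]
  norm_num

lemma TZc_ge (n : ℕ) : ((n:ℝ) + 2) / 2 ≤ TZc n := by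
  have h1 := TZu_gt n; have h2 := TZu_le n
  have hn : (0:ℝ) < (n:ℝ) + 2 := by positivity
  have hu1 : TZu n - 1 = 1 / ((n:ℝ) + 2) := by simp [TZu]
  have hden : 0 < 6 * (TZu n - 1) * (2 - TZu n) := by nlinarith
  rw [TZc, le_div_iff₀ hden, hu1]
  have h2u : 2 - TZu n ≤ 1 := by linarith
  have h3 : (1:ℝ) ≤ (TZu n) ^ 3 := one_le_pow₀ h1.le
  have hnum : 3 ≤ (TZu n) ^ 3 * (9 - 4 * TZu n) := by nlinarith
  have heq : ((n:ℝ)+2)/2 * (6 * (1/((n:ℝ)+2)) * (2 - TZu n)) = 3 * (2 - TZu n) := by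
    field_simp; ring
  rw [heq]
  nlinarith

lemma TZkey (n : ℕ) :
    6 * (TZx n) ^ 4 * ((TZu n - 1) * (2 - TZu n)) = (TZu n) ^ 3 * (9 - 4 * TZu n) := by
  have h1 := TZu_gt n; have h2 := TZu_le n
  have hden : (6 * (TZu n - 1) * (2 - TZu n)) ≠ 0 := by nlinarith
  rw [TZx_pow, TZc]
  have e : 6 * (TZu n ^ 3 * (9 - 4 * TZu n) / (6 * (TZu n - 1) * (2 - TZu n))) * ((TZu n - 1) * (2 - TZu n))
      = TZu n ^ 3 * (9 - 4 * TZu n) * ((6 * (TZu n - 1) * (2 - TZu n)) / (6 * (TZu n - 1) * (2 - TZu n))) := by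
    ring
  rw [e, div_self hden, mul_one]

lemma TZeq (n : ℕ) :
    4 * TZx n * (TZy n) ^ 4 - 9 * (TZy n) ^ 3 - 6 * (TZx n) ^ 3 * (TZy n) ^ 2
      + 18 * (TZx n) ^ 2 * TZy n - 12 * TZx n = 0 := by
  have hx := (TZx_pos n).ne'
  have key := TZkey n
  rw [TZy]
  field_simp
  linear_combination key

theorem milnor_set_of_TZ_example_unbounded :
    ¬ Bornology.IsBounded {P : ℝ × ℝ × ℝ |
        4 * P.1 * P.2.1 ^ 4 - 9 * P.2.1 ^ 3 - 6 * P.1 ^ 3 * P.2.1 ^ 2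
          + 18 * P.1 ^ 2 * P.2.1 - 12 * P.1 = 0} ∧
    ∃ (x y : ℕ → ℝ) (z : ℝ),
      (∀ n, 4 * x n * (y n) ^ 4 - 9 * (y n) ^ 3 - 6 * (x n) ^ 3 * (y n) ^ 2
          + 18 * (x n) ^ 2 * y n - 12 * x n = 0) ∧
      Tendsto x atTop atTop ∧
      Tendsto (fun n => x n * y n) atTop (nhds 1) := by
  have hn_top : Tendsto (fun n : ℕ => ((n:ℝ) + 2)) atTop atTop :=
    tendsto_atTop_add_const_right _ _ tendsto_natCast_atTop_atTop
  have hx_top : Tendsto TZx atTop atTop := by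
    have h1 : Tendsto (fun n : ℕ => (((n:ℝ) + 2)/2) ^ ((1:ℝ)/4)) atTop atTop := by
      exact (tendsto_rpow_atTop (by norm_num : (0:ℝ) < 1/4)).comp
        (hn_top.atTop_div_const (by norm_num))
    apply tendsto_atTop_mono _ h1
    intro n
    exact Real.rpow_le_rpow (by positivity) (TZc_ge n) (by norm_num)
  have hxy : Tendsto (fun n => TZx n * TZy n) atTop (nhds 1) := by
    have heq : ∀ n, TZx n * TZy n = TZu n := by
      intro n; rw [TZy, mul_div_cancel₀ _ (TZx_pos n).ne']
    have h0 : Tendsto (fun n : ℕ => ((n:ℝ)+2)⁻¹) atTop (nhds 0) :=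
      hn_top.inv_tendsto_atTop
    have h1 : Tendsto (fun n : ℕ => 1 + ((n:ℝ)+2)⁻¹) atTop (nhds 1) := by
      simpa using tendsto_const_nhds.add h0
    simp only [heq, TZu, one_div]
    exact h1
  refine ⟨?_, TZx, TZy, 0, TZeq, hx_top, hxy⟩
  intro hb
  obtain ⟨R, hR⟩ := (isBounded_iff_forall_norm_le).mp hb
  obtain ⟨n, hn⟩ := (tendsto_atTop.mp hx_top (R + 1)).exists
  have hmem : (TZx n, TZy n, (0:ℝ)) ∈ {P : ℝ × ℝ × ℝ |
      4 * P.1 * P.2.1 ^ 4 - 9 * P.2.1 ^ 3 - 6 * P.1 ^ 3 * P.2.1 ^ 2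
        + 18 * P.1 ^ 2 * P.2.1 - 12 * P.1 = 0} := TZeq n
  have h1 : |TZx n| ≤ ‖(TZx n, TZy n, (0:ℝ))‖ := by
    simpa using norm_fst_le ((TZx n, TZy n, (0:ℝ)) : ℝ × ℝ × ℝ)
  have h2 := hR _ hmem
  have := le_trans (le_abs_self _) (le_trans h1 h2)
  linarith
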